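/- Let A = A1 ×_C A2 and let Δ1 ∈ Diff_k(A1), Δ2 ∈ Diff_k(A2) be differential operators of order ≤ k satisfying p1 ∘ Δ1 ∘ π1 = p2 ∘ Δ2 ∘ π2. Then the map Δ : A → A, Δ(a1,a2) = (Δ1(a1), Δ2(a2)), is well defined (lands in A) and is a differential operator of order ≤ k on A; moreover it is the unique linear map commuting with both projections over Δ1 and Δ2. -/

import Mathlib

/-- `δ_a(Δ) = a·Δ − Δ∘(a·)`. -/
noncomputable def deltaOp {A : Type} [CommRing A] [Algebra ℝ A]
    (a : A) (Δ : Module.End ℝ A) : Module.End ℝ A :=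
  LinearMap.mulLeft ℝ a ∘ₗ Δ - Δ ∘ₗ LinearMap.mulLeft ℝ a

/-- `Δ` is a linear differential operator of order `≤ k`. -/
def IsDiffOp {A : Type} [CommRing A] [Algebra ℝ A]
    (k : ℕ) (Δ : Module.End ℝ A) : Prop :=
  ∀ a : Fin (k + 1) → A, (List.ofFn a).foldr deltaOp Δ = 0

/-- The fibered product `A = A₁ ×_C A₂` as a subalgebra of `A₁ × A₂`. -/
noncomputable def fiberProd {A1 A2 C : Type} [CommRing A1] [CommRing A2] [CommRing C]
    [Algebra ℝ A1] [Algebra ℝ A2] [Algebra ℝ C]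
    (p1 : A1 →ₐ[ℝ] C) (p2 : A2 →ₐ[ℝ] C) : Subalgebra ℝ (A1 × A2) :=
  AlgHom.equalizer (p1.comp (AlgHom.fst ℝ A1 A2)) (p2.comp (AlgHom.snd ℝ A1 A2))

lemma deltaOp_compat {A1 A2 C : Type} [CommRing A1] [CommRing A2] [CommRing C]
    [Algebra ℝ A1] [Algebra ℝ A2] [Algebra ℝ C]
    {p1 : A1 →ₐ[ℝ] C} {p2 : A2 →ₐ[ℝ] C}
    (Δ : Module.End ℝ (fiberProd p1 p2)) (D1 : Module.End ℝ A1) (D2 : Module.End ℝ A2)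
    (h : ∀ x : fiberProd p1 p2,
      ((Δ x : A1 × A2)).1 = D1 (x : A1 × A2).1 ∧
      ((Δ x : A1 × A2)).2 = D2 (x : A1 × A2).2)
    (a : fiberProd p1 p2) :
    ∀ x : fiberProd p1 p2,
      ((deltaOp a Δ x : A1 × A2)).1 = deltaOp (a : A1 × A2).1 D1 (x : A1 × A2).1 ∧
      ((deltaOp a Δ x : A1 × A2)).2 = deltaOp (a : A1 × A2).2 D2 (x : A1 × A2).2 := by
  intro x
  have hax : ((a * x : fiberProd p1 p2) : A1 × A2) = (a : A1 × A2) * (x : A1 × A2) := rfl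
  simp only [deltaOp, LinearMap.sub_apply, LinearMap.comp_apply, LinearMap.mulLeft_apply]
  constructor
  · show ((a * Δ x - Δ (a * x) : fiberProd p1 p2) : A1 × A2).1 = _
    push_cast
    simp [Prod.fst_mul, (h x).1, (h (a * x)).1, hax]
  · show ((a * Δ x - Δ (a * x) : fiberProd p1 p2) : A1 × A2).2 = _
    push_cast
    simp [Prod.snd_mul, (h x).2, (h (a * x)).2, hax]

lemma foldr_compat {A1 A2 C : Type} [CommRing A1] [CommRing A2] [CommRing C]
    [Algebra ℝ A1] [Algebra ℝ A2] [Algebra ℝ C]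
    {p1 : A1 →ₐ[ℝ] C} {p2 : A2 →ₐ[ℝ] C}
    (Δ : Module.End ℝ (fiberProd p1 p2)) (D1 : Module.End ℝ A1) (D2 : Module.End ℝ A2)
    (h : ∀ x : fiberProd p1 p2,
      ((Δ x : A1 × A2)).1 = D1 (x : A1 × A2).1 ∧
      ((Δ x : A1 × A2)).2 = D2 (x : A1 × A2).2)
    (l : List (fiberProd p1 p2)) :
    ∀ x : fiberProd p1 p2,
      ((l.foldr deltaOp Δ x : A1 × A2)).1
        = (l.map (fun y : fiberProd p1 p2 => ((y : A1 × A2)).1)).foldr deltaOp D1 (x : A1 × A2).1 ∧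
      ((l.foldr deltaOp Δ x : A1 × A2)).2
        = (l.map (fun y : fiberProd p1 p2 => ((y : A1 × A2)).2)).foldr deltaOp D2 (x : A1 × A2).2 := by
  induction l with
  | nil => exact h
  | cons a l ih =>
      simp only [List.map_cons, List.foldr_cons]
      exact deltaOp_compat _ _ _ ih a

noncomputable def liftDelta {A1 A2 C : Type} [CommRing A1] [CommRing A2] [CommRing C]
    [Algebra ℝ A1] [Algebra ℝ A2] [Algebra ℝ C]
    {p1 : A1 →ₐ[ℝ] C} {p2 : A2 →ₐ[ℝ] C}
    (Δ1 : Module.End ℝ A1) (Δ2 : Module.End ℝ A2)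
    (hc : ∀ x : fiberProd p1 p2, p1 (Δ1 (x : A1 × A2).1) = p2 (Δ2 (x : A1 × A2).2)) :
    Module.End ℝ (fiberProd p1 p2) where
  toFun x := ⟨(Δ1 (x : A1 × A2).1, Δ2 (x : A1 × A2).2), hc x⟩
  map_add' x y := by
    apply Subtype.ext
    have h : ((x + y : fiberProd p1 p2) : A1 × A2) = (x : A1 × A2) + (y : A1 × A2) := rfl
    simp [h, Prod.ext_iff]
  map_smul' r x := by
    apply Subtype.ext
    have h : ((r • x : fiberProd p1 p2) : A1 × A2) = r • (x : A1 × A2) := rfl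
    simp [h, Prod.ext_iff]

/-- a compatible pair `(Δ₁, Δ₂)` of order-`≤ k` differential
operators on `A₁, A₂` lifts to a unique linear map `Δ` of the fibered product
commuting with both projections, and this `Δ` is a differential operator of
order `≤ k` on `A`. -/
theorem diffOp_pair_lifts
    {A1 A2 C : Type} [CommRing A1] [CommRing A2] [CommRing C]
    [Algebra ℝ A1] [Algebra ℝ A2] [Algebra ℝ C]
    (p1 : A1 →ₐ[ℝ] C) (p2 : A2 →ₐ[ℝ] C)
    (hp1 : Function.Surjective p1) (hp2 : Function.Surjective p2)
    (k : ℕ) (Δ1 : Module.End ℝ A1) (Δ2 : Module.End ℝ A2)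
    (hΔ1 : IsDiffOp k Δ1) (hΔ2 : IsDiffOp k Δ2)
    (hcompat : ∀ x : fiberProd p1 p2, p1 (Δ1 (x : A1 × A2).1) = p2 (Δ2 (x : A1 × A2).2)) :
    (∃! Δ : Module.End ℝ (fiberProd p1 p2),
        ∀ x : fiberProd p1 p2,
          ((Δ x : A1 × A2)).1 = Δ1 (x : A1 × A2).1 ∧
          ((Δ x : A1 × A2)).2 = Δ2 (x : A1 × A2).2) ∧
    (∀ Δ : Module.End ℝ (fiberProd p1 p2),
        (∀ x : fiberProd p1 p2,
          ((Δ x : A1 × A2)).1 = Δ1 (x : A1 × A2).1 ∧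
          ((Δ x : A1 × A2)).2 = Δ2 (x : A1 × A2).2) →
        IsDiffOp k Δ) := by
  constructor
  · refine ⟨liftDelta Δ1 Δ2 hcompat, fun x => ⟨rfl, rfl⟩, ?_⟩
    intro Δ hΔ
    exact LinearMap.ext fun x => Subtype.ext (Prod.ext (hΔ x).1 (hΔ x).2)
  · intro Δ hΔ
    intro a
    refine LinearMap.ext fun x => Subtype.ext ?_
    have h := foldr_compat Δ Δ1 Δ2 hΔ (List.ofFn a) x
    refine Prod.ext ?_ ?_
    · have e : (List.ofFn a).map (fun y : fiberProd p1 p2 => ((y : A1 × A2)).1)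
          = List.ofFn (fun i => ((a i : A1 × A2)).1) := List.map_ofFn
      rw [h.1, e, hΔ1 (fun i => ((a i : A1 × A2)).1)]
      simp
    · have e : (List.ofFn a).map (fun y : fiberProd p1 p2 => ((y : A1 × A2)).2)
          = List.ofFn (fun i => ((a i : A1 × A2)).2) := List.map_ofFn
      rw [h.2, e, hΔ2 (fun i => ((a i : A1 × A2)).2)]
      simp
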